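/- Let X be an ordered Banach space with generating cone and Z a Banach lattice, with a positive J ∈ L(X, Z) and positive operators (R_n) ⊆ L(Z, X) such that R_n J → id_X in the weak operator topology. Then span(X'_+) is a monotonically complete Banach lattice with respect to a norm equivalent to the span norm: every increasing norm-bounded net in span(X'_+) has a supremum. -/

import Mathlib

open Filter Topology

/-- `f` is a positive functional with respect to the cone `P`. -/
def dualPos {X : Type*} [NormedAddCommGroup X] [NormedSpace ℝ X]
    (P : Set X) (f : X →L[ℝ] ℝ) : Prop := ∀ x ∈ P, 0 ≤ f x

/-- `f` lies in the span `X'₊ - X'₊` of the dual cone. -/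
def inDualSpan {X : Type*} [NormedAddCommGroup X] [NormedSpace ℝ X]
    (P : Set X) (f : X →L[ℝ] ℝ) : Prop :=
  ∃ g, dualPos P g ∧ ∃ h, dualPos P h ∧ f = g - h

/-- The dual order on `X'` induced by the cone `P ⊆ X`. -/
def dualLE {X : Type*} [NormedAddCommGroup X] [NormedSpace ℝ X]
    (P : Set X) (f g : X →L[ℝ] ℝ) : Prop := ∀ x ∈ P, f x ≤ g x

/-- The span norm on `span(X'₊)`. -/
noncomputable def dualSpanNorm {X : Type*} [NormedAddCommGroup X] [NormedSpace ℝ X]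
    (P : Set X) (f : X →L[ℝ] ℝ) : ℝ :=
  sInf {r : ℝ | ∃ g, dualPos P g ∧ ∃ h, dualPos P h ∧ f = g - h ∧ r = ‖g‖ + ‖h‖}

/-- `m` is the modulus (supremum of `±f`) of `f` within `span(X'₊)`. -/
def IsDualModulus {X : Type*} [NormedAddCommGroup X] [NormedSpace ℝ X]
    (P : Set X) (f m : X →L[ℝ] ℝ) : Prop :=
  dualPos P m ∧ dualLE P f m ∧ dualLE P (-f) m ∧
    ∀ u : X →L[ℝ] ℝ, inDualSpan P u → dualLE P f u → dualLE P (-f) u → dualLE P m u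

lemma riesz_decomp {Z : Type*} [NormedAddCommGroup Z] [Lattice Z] [IsOrderedAddMonoid Z] {y z u : Z}
    (hy : 0 ≤ y) (hz : 0 ≤ z) (hu : -(y+z) ≤ u) (hu' : u ≤ y + z) :
    ∃ v : Z, -y ≤ v ∧ v ≤ y ∧ -z ≤ u - v ∧ u - v ≤ z := by
  have h0 : -y ≤ u + z := by
    have : -y - z ≤ u := by rw [sub_eq_add_neg, ← neg_add]; exact hu
    exact sub_le_iff_le_add.mp this
  have h1 : (u ⊔ -y) ⊓ y ≤ u + z :=
    inf_le_left.trans (sup_le (le_add_of_nonneg_right hz) h0)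
  refine ⟨(u ⊔ -y) ⊓ y, le_inf le_sup_right ((neg_nonpos.mpr hy).trans hy), inf_le_right, ?_, ?_⟩
  · rw [neg_le_sub_iff_le_add]; exact h1
  · rw [sub_le_comm]
    exact le_inf ((sub_le_self u hz).trans le_sup_left) (sub_le_iff_le_add.mpr hu')

lemma ando {X : Type*} [NormedAddCommGroup X] [NormedSpace ℝ X] [CompleteSpace X]
    (P : Set X) (hPclosed : IsClosed P)
    (hPadd : ∀ x ∈ P, ∀ y ∈ P, x + y ∈ P)
    (hPsmul : ∀ (a : ℝ), 0 ≤ a → ∀ x ∈ P, a • x ∈ P)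
    (hgen : ∀ x : X, ∃ y ∈ P, ∃ z ∈ P, x = y - z) :
    ∃ C > 0, ∀ x : X, ∃ y ∈ P, ∃ z ∈ P, x = y - z ∧ ‖y‖ + ‖z‖ ≤ C * ‖x‖ := by
  obtain ⟨y0, hy0, -⟩ := hgen 0
  have h0P : (0 : X) ∈ P := by simpa using hPsmul 0 le_rfl y0 hy0
  set S : ℕ → Set X := fun n =>
    {x | ∃ y ∈ P, ∃ z ∈ P, x = y - z ∧ ‖y‖ ≤ n ∧ ‖z‖ ≤ n} with hS
  have hSconv : ∀ n, Convex ℝ (S n) := by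
    intro n a ha b hb s t hs ht hst
    obtain ⟨y1, hy1, z1, hz1, rfl, hy1n, hz1n⟩ := ha
    obtain ⟨y2, hy2, z2, hz2, rfl, hy2n, hz2n⟩ := hb
    refine ⟨s • y1 + t • y2, hPadd _ (hPsmul s hs _ hy1) _ (hPsmul t ht _ hy2),
      s • z1 + t • z2, hPadd _ (hPsmul s hs _ hz1) _ (hPsmul t ht _ hz2), by module, ?_, ?_⟩
    · calc ‖s • y1 + t • y2‖ ≤ ‖s • y1‖ + ‖t • y2‖ := norm_add_le _ _
        _ ≤ s * n + t * n := by
            rw [norm_smul, norm_smul, Real.norm_of_nonneg hs, Real.norm_of_nonneg ht]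
            exact add_le_add (mul_le_mul_of_nonneg_left hy1n hs)
              (mul_le_mul_of_nonneg_left hy2n ht)
        _ = n := by rw [← add_mul, hst, one_mul]
    · calc ‖s • z1 + t • z2‖ ≤ ‖s • z1‖ + ‖t • z2‖ := norm_add_le _ _
        _ ≤ s * n + t * n := by
            rw [norm_smul, norm_smul, Real.norm_of_nonneg hs, Real.norm_of_nonneg ht]
            exact add_le_add (mul_le_mul_of_nonneg_left hz1n hs)
              (mul_le_mul_of_nonneg_left hz2n ht)
        _ = n := by rw [← add_mul, hst, one_mul]
  have hSsymm : ∀ n, ∀ x ∈ S n, -x ∈ S n := by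
    rintro n x ⟨y, hy, z, hz, rfl, hyn, hzn⟩
    exact ⟨z, hz, y, hy, by abel, hzn, hyn⟩
  have hUnion : (⋃ n, closure (S n)) = Set.univ := by
    refine Set.eq_univ_of_forall fun x => ?_
    obtain ⟨y, hy, z, hz, rfl⟩ := hgen x
    obtain ⟨n, hn⟩ := exists_nat_ge (max ‖y‖ ‖z‖)
    exact Set.mem_iUnion.mpr ⟨n, subset_closure
      ⟨y, hy, z, hz, rfl, (le_max_left _ _).trans hn, (le_max_right _ _).trans hn⟩⟩
  have : Nonempty X := ⟨0⟩
  obtain ⟨n, x₀, hx₀⟩ := nonempty_interior_of_iUnion_of_closed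
    (fun n => isClosed_closure (s := S n)) hUnion
  obtain ⟨ε, hε, hball⟩ := Metric.isOpen_iff.mp isOpen_interior x₀ hx₀
  have hballsub : Metric.ball x₀ ε ⊆ closure (S n) := hball.trans interior_subset
  -- closure of S n is symmetric
  have hclsymm : ∀ x ∈ closure (S n), -x ∈ closure (S n) := by
    intro x hx
    rw [Metric.mem_closure_iff] at hx ⊢
    intro δ hδ
    obtain ⟨a, ha, hda⟩ := hx δ hδ
    exact ⟨-a, hSsymm n a ha, by
      rw [dist_eq_norm] at hda ⊢
      simpa [neg_add_eq_sub, norm_sub_rev a] using hda⟩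
  -- small vectors lie in closure (S n)
  have hkey : ∀ v : X, ‖v‖ < ε → v ∈ closure (S n) := by
    intro v hv
    have h1 : x₀ + v ∈ closure (S n) := hballsub (by
      simpa [Metric.mem_ball, dist_eq_norm] using hv)
    have h2 : -(x₀ - v) ∈ closure (S n) := hclsymm _ (hballsub (by
      simpa [Metric.mem_ball, dist_eq_norm] using hv))
    have hv' := (hSconv n).closure h1 h2 (le_of_lt one_half_pos) (le_of_lt one_half_pos)
      (by norm_num)
    have heq : (1/2 : ℝ) • (x₀ + v) + (1/2 : ℝ) • (-(x₀ - v)) = v := by module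
    rwa [heq] at hv'
  -- approximation step
  have step : ∀ u : X, ‖u‖ < ε → ∃ p : X × X, p.1 ∈ P ∧ p.2 ∈ P ∧ ‖p.1‖ ≤ n ∧ ‖p.2‖ ≤ n ∧
      ‖u - (p.1 - p.2)‖ < ε / 2 := by
    intro u hu
    have hc := hkey u hu
    rw [Metric.mem_closure_iff] at hc
    obtain ⟨a, ⟨y, hy, z, hz, rfl, hyn, hzn⟩, hda⟩ := hc (ε/2) (by positivity)
    exact ⟨(y, z), hy, hz, hyn, hzn, by rwa [dist_eq_norm] at hda⟩
  have main : ∀ x : X, ‖x‖ < ε →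
      ∃ y ∈ P, ∃ z ∈ P, x = y - z ∧ ‖y‖ ≤ 2*n ∧ ‖z‖ ≤ 2*n := by
    intro x hx
    let T : {v : X // ‖v‖ < ε} → {v : X // ‖v‖ < ε} × (X × X) := fun v =>
      ⟨⟨(2:ℝ) • (v.1 - ((step v.1 v.2).choose.1 - (step v.1 v.2).choose.2)), by
        have h := (step v.1 v.2).choose_spec.2.2.2.2
        rw [norm_smul, Real.norm_ofNat]
        linarith⟩, (step v.1 v.2).choose⟩
    let u : ℕ → {v : X // ‖v‖ < ε} := fun k => Nat.rec ⟨x, hx⟩ (fun _ v => (T v).1) k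
    let d : ℕ → X × X := fun k => (step (u k).1 (u k).2).choose
    have hd : ∀ k, (d k).1 ∈ P ∧ (d k).2 ∈ P ∧ ‖(d k).1‖ ≤ n ∧ ‖(d k).2‖ ≤ n ∧
        ‖(u k).1 - ((d k).1 - (d k).2)‖ < ε / 2 := fun k => (step (u k).1 (u k).2).choose_spec
    have hrec : ∀ k, (u (k+1)).1 = (2:ℝ) • ((u k).1 - ((d k).1 - (d k).2)) := fun k => rfl
    have hps : ∀ k, x = (∑ j ∈ Finset.range k, ((1/2:ℝ)^j • ((d j).1 - (d j).2)))
        + (1/2:ℝ)^k • (u k).1 := by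
      intro k
      induction k with
      | zero => simp [u]
      | succ k ih =>
        rw [Finset.sum_range_succ]
        have h2 : (1/2:ℝ)^(k+1) • ((u (k+1)).1)
            = (1/2:ℝ)^k • ((u k).1 - ((d k).1 - (d k).2)) := by
          rw [hrec k, smul_smul]
          congr 1
          ring
        rw [h2, ih]
        module
    have hsum1 : Summable (fun k => (1/2:ℝ)^k • (d k).1) := by
      refine Summable.of_norm_bounded (g := fun k => (n:ℝ) * (1/2)^k)
        ((summable_geometric_of_lt_one (by norm_num) (by norm_num)).mul_left _) fun k => ?_
      rw [norm_smul, Real.norm_of_nonneg (by positivity), mul_comm]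
      exact mul_le_mul_of_nonneg_right (hd k).2.2.1 (by positivity)
    have hsum2 : Summable (fun k => (1/2:ℝ)^k • (d k).2) := by
      refine Summable.of_norm_bounded (g := fun k => (n:ℝ) * (1/2)^k)
        ((summable_geometric_of_lt_one (by norm_num) (by norm_num)).mul_left _) fun k => ?_
      rw [norm_smul, Real.norm_of_nonneg (by positivity), mul_comm]
      exact mul_le_mul_of_nonneg_right (hd k).2.2.2.1 (by positivity)
    have hPsums : ∀ (w : ℕ → X), (∀ k, w k ∈ P) → ∀ k, (∑ j ∈ Finset.range k, (1/2:ℝ)^j • w j) ∈ P := by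
      intro w hw k
      induction k with
      | zero => simpa using h0P
      | succ k ih =>
        rw [Finset.sum_range_succ]
        exact hPadd _ ih _ (hPsmul _ (by positivity) _ (hw k))
    have hgeo : ∑' (k:ℕ), (n:ℝ) * (1/2)^k = 2*n := by
      rw [tsum_mul_left, tsum_geometric_of_lt_one (by norm_num) (by norm_num)]
      norm_num; ring
    have hnormle : ∀ (w : ℕ → X), (∀ k, ‖w k‖ ≤ n) → Summable (fun k => (1/2:ℝ)^k • w k) →
        ‖∑' k, (1/2:ℝ)^k • w k‖ ≤ 2*n := by
      intro w hw hsw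
      have hble : ∀ k, ‖(1/2:ℝ)^k • w k‖ ≤ (n:ℝ) * (1/2)^k := by
        intro k
        rw [norm_smul, Real.norm_of_nonneg (by positivity), mul_comm]
        exact mul_le_mul_of_nonneg_right (hw k) (by positivity)
      have hswn : Summable (fun k => ‖(1/2:ℝ)^k • w k‖) :=
        Summable.of_nonneg_of_le (fun k => norm_nonneg _) hble
          ((summable_geometric_of_lt_one (by norm_num) (by norm_num)).mul_left _)
      calc ‖∑' k, (1/2:ℝ)^k • w k‖ ≤ ∑' k, ‖(1/2:ℝ)^k • w k‖ :=
            norm_tsum_le_tsum_norm hswn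
        _ ≤ ∑' (k:ℕ), (n:ℝ) * (1/2)^k := Summable.tsum_le_tsum hble hswn
              ((summable_geometric_of_lt_one (by norm_num) (by norm_num)).mul_left _)
        _ = 2*n := hgeo
    set y := ∑' k, (1/2:ℝ)^k • (d k).1 with hy
    set z := ∑' k, (1/2:ℝ)^k • (d k).2 with hz
    have hyP : y ∈ P := hPclosed.mem_of_tendsto hsum1.hasSum.tendsto_sum_nat
      (Eventually.of_forall (hPsums _ (fun k => (hd k).1)))
    have hzP : z ∈ P := hPclosed.mem_of_tendsto hsum2.hasSum.tendsto_sum_nat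
      (Eventually.of_forall (hPsums _ (fun k => (hd k).2.1)))
    have hxyz : x = y - z := by
      have ht1 : Tendsto (fun k => ∑ j ∈ Finset.range k, ((1/2:ℝ)^j • ((d j).1 - (d j).2)))
          atTop (𝓝 (y - z)) := by
        have hA := hsum1.hasSum.tendsto_sum_nat
        have hB := hsum2.hasSum.tendsto_sum_nat
        rw [← hy] at hA
        rw [← hz] at hB
        refine (hA.sub hB).congr fun k => ?_
        rw [← Finset.sum_sub_distrib]
        exact Finset.sum_congr rfl fun j _ => (smul_sub _ _ _).symm
      have ht2 : Tendsto (fun k => ∑ j ∈ Finset.range k, ((1/2:ℝ)^j • ((d j).1 - (d j).2)))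
          atTop (𝓝 x) := by
        have hz0 : Tendsto (fun k => (1/2:ℝ)^k • (u k).1) atTop (𝓝 0) := by
          have hg : Tendsto (fun k => (1/2:ℝ)^k * ε) atTop (𝓝 0) := by
            have h' := (tendsto_pow_atTop_nhds_zero_of_lt_one (by norm_num : (0:ℝ) ≤ 1/2)
              (by norm_num)).mul_const ε
            rwa [zero_mul] at h'
          refine squeeze_zero_norm (fun k => ?_) hg
          rw [norm_smul, Real.norm_of_nonneg (by positivity)]
          exact mul_le_mul_of_nonneg_left (u k).2.le (by positivity)
        have : Tendsto (fun k => x - (1/2:ℝ)^k • (u k).1) atTop (𝓝 (x - 0)) :=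
          tendsto_const_nhds.sub hz0
        rw [sub_zero] at this
        refine this.congr fun k => ?_
        rw [sub_eq_iff_eq_add]
        exact hps k
      exact tendsto_nhds_unique ht2 ht1
    exact ⟨y, hyP, z, hzP, hxyz, hnormle _ (fun k => (hd k).2.2.1) hsum1,
      hnormle _ (fun k => (hd k).2.2.2.1) hsum2⟩
  refine ⟨(8*(n+1))/ε, by positivity, fun x => ?_⟩
  by_cases hx0 : x = 0
  · exact ⟨0, h0P, 0, h0P, by simp [hx0], by simp [hx0]⟩
  · have hxpos : 0 < ‖x‖ := norm_pos_iff.mpr hx0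
    set t := ε / (2 * ‖x‖) with ht
    have htpos : 0 < t := by positivity
    have hsm : ‖t • x‖ < ε := by
      rw [norm_smul, Real.norm_of_nonneg htpos.le]
      have h12 : t * ‖x‖ = ε / 2 := by
        rw [ht]; field_simp
      rw [h12]
      linarith
    obtain ⟨y', hy', z', hz', hdec, hyb, hzb⟩ := main _ hsm
    refine ⟨t⁻¹ • y', hPsmul _ (by positivity) _ hy', t⁻¹ • z', hPsmul _ (by positivity) _ hz',
      ?_, ?_⟩
    · rw [← smul_sub, ← hdec, smul_smul, inv_mul_cancel₀ htpos.ne', one_smul]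
    · rw [norm_smul, norm_smul, Real.norm_of_nonneg (inv_nonneg.mpr htpos.le)]
      have htinv : t⁻¹ = 2*‖x‖/ε := by
        rw [ht, inv_div]
      rw [htinv, ← mul_add]
      have h2 : (2*‖x‖/ε) * (‖y'‖+‖z'‖) ≤ (2*‖x‖/ε) * (4*n) := by
        apply mul_le_mul_of_nonneg_left (by linarith) (by positivity)
      refine h2.trans ?_
      rw [div_mul_eq_mul_div, div_le_iff₀ hε]
      have he : 8*((n:ℝ)+1)/ε*‖x‖*ε = 8*((n:ℝ)+1)*‖x‖ := by field_simp
      rw [he]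
      nlinarith [hxpos.le, Nat.cast_nonneg (α := ℝ) n]

lemma opNorm_le_dualSpanNorm {X : Type*} [NormedAddCommGroup X] [NormedSpace ℝ X]
    (P : Set X) {f : X →L[ℝ] ℝ} (hf : inDualSpan P f) : ‖f‖ ≤ dualSpanNorm P f := by
  obtain ⟨g, hg, h, hh, hfe⟩ := hf
  refine le_csInf ⟨‖g‖ + ‖h‖, g, hg, h, hh, hfe, rfl⟩ ?_
  rintro r ⟨g', -, h', -, hfe', rfl⟩
  rw [hfe']
  exact norm_sub_le _ _

lemma dualSpanNorm_bddBelow {X : Type*} [NormedAddCommGroup X] [NormedSpace ℝ X]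
    (P : Set X) (f : X →L[ℝ] ℝ) :
    BddBelow {r : ℝ | ∃ g, dualPos P g ∧ ∃ h, dualPos P h ∧ f = g - h ∧ r = ‖g‖ + ‖h‖} := by
  refine ⟨0, ?_⟩
  rintro r ⟨g, -, h, -, -, rfl⟩
  positivity

lemma dualPos_zero {X : Type*} [NormedAddCommGroup X] [NormedSpace ℝ X] (P : Set X) :
    dualPos P (0 : X →L[ℝ] ℝ) := fun x _ => by simp

lemma inDualSpan_of_dualPos {X : Type*} [NormedAddCommGroup X] [NormedSpace ℝ X]
    {P : Set X} {f : X →L[ℝ] ℝ} (hf : dualPos P f) : inDualSpan P f :=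
  ⟨f, hf, 0, dualPos_zero P, (sub_zero f).symm⟩

set_option maxHeartbeats 2000000 in
/-- Let `X` be an ordered Banach space with generating (closed) cone `P` and
`Z` a Banach lattice, with positive `J : X → Z` and positive `(Rₙ) : Z → X` such that
`Rₙ J → id_X` in the weak operator topology. Then `span(X'₊)` is a monotonically complete
Banach lattice with respect to a norm equivalent to the span norm: it is a vector lattice,
carries an equivalent lattice norm, and every increasing norm-bounded net in its positive
cone has a supremum. -/
theorem stmt10 {X Z : Type*}
    [NormedAddCommGroup X] [NormedSpace ℝ X] [CompleteSpace X]
    [NormedAddCommGroup Z] [Lattice Z] [IsOrderedAddMonoid Z] [HasSolidNorm Z] [NormedSpace ℝ Z] [CompleteSpace Z]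
    (P : Set X) (hPclosed : IsClosed P)
    (hPadd : ∀ x ∈ P, ∀ y ∈ P, x + y ∈ P)
    (hPsmul : ∀ (a : ℝ), 0 ≤ a → ∀ x ∈ P, a • x ∈ P)
    (hPpointed : ∀ x ∈ P, -x ∈ P → x = 0)
    (hgen : ∀ x : X, ∃ y ∈ P, ∃ z ∈ P, x = y - z)
    (J : X →L[ℝ] Z) (hJ : ∀ x ∈ P, 0 ≤ J x)
    (R : ℕ → Z →L[ℝ] X) (hR : ∀ n, ∀ z : Z, 0 ≤ z → R n z ∈ P)
    (hWOT : ∀ (x : X) (φ : X →L[ℝ] ℝ),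
      Tendsto (fun n => φ (R n (J x))) atTop (𝓝 (φ x))) :
    -- `span(X'₊)` is a vector lattice:
    (∀ f : X →L[ℝ] ℝ, inDualSpan P f → ∃ m, IsDualModulus P f m) ∧
    -- there is a lattice norm equivalent to the span norm:
    (∃ N : (X →L[ℝ] ℝ) → ℝ, ∃ c₁ > (0 : ℝ), ∃ c₂ > (0 : ℝ),
      (∀ f, inDualSpan P f →
        c₁ * dualSpanNorm P f ≤ N f ∧ N f ≤ c₂ * dualSpanNorm P f) ∧
      (∀ f g mf mg, inDualSpan P f → inDualSpan P g →
        IsDualModulus P f mf → IsDualModulus P g mg → dualLE P mf mg → N f ≤ N g)) ∧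
    -- monotone completeness: increasing span-norm-bounded nets in `X'₊` have suprema:
    (∀ (ι : Type) [Nonempty ι] [SemilatticeSup ι] (g : ι → X →L[ℝ] ℝ),
      (∀ i, dualPos P (g i)) →
      (∀ i j, i ≤ j → dualLE P (g i) (g j)) →
      (∃ b : ℝ, ∀ i, dualSpanNorm P (g i) ≤ b) →
      ∃ s : X →L[ℝ] ℝ, inDualSpan P s ∧ (∀ i, dualLE P (g i) s) ∧
        ∀ u : X →L[ℝ] ℝ, inDualSpan P u → (∀ i, dualLE P (g i) u) → dualLE P s u) := by
  classical
  obtain ⟨y0, hy0, -⟩ := hgen 0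
  have h0P : (0 : X) ∈ P := by simpa using hPsmul 0 le_rfl y0 hy0
  obtain ⟨C, hC, hdec⟩ := ando P hPclosed hPadd hPsmul hgen
  -- Part 3 : monotone completeness
  have part3 : ∀ (ι : Type) [Nonempty ι] [SemilatticeSup ι] (g : ι → X →L[ℝ] ℝ),
      (∀ i, dualPos P (g i)) →
      (∀ i j, i ≤ j → dualLE P (g i) (g j)) →
      (∃ b : ℝ, ∀ i, dualSpanNorm P (g i) ≤ b) →
      ∃ s : X →L[ℝ] ℝ, inDualSpan P s ∧ (∀ i, dualLE P (g i) s) ∧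
        ∀ u : X →L[ℝ] ℝ, inDualSpan P u → (∀ i, dualLE P (g i) u) → dualLE P s u := by
    intro ι _ _ g hpos hmono hbdd
    obtain ⟨b, hb⟩ := hbdd
    have hnorm : ∀ i, ‖g i‖ ≤ b := fun i =>
      (opNorm_le_dualSpanNorm P (inDualSpan_of_dualPos (hpos i))).trans (hb i)
    have habs : ∀ i (x : X), |g i x| ≤ b * ‖x‖ := by
      intro i x
      calc |g i x| = ‖g i x‖ := (Real.norm_eq_abs _).symm
        _ ≤ ‖g i‖ * ‖x‖ := (g i).le_opNorm x
        _ ≤ b * ‖x‖ := mul_le_mul_of_nonneg_right (hnorm i) (norm_nonneg x)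
    have hlim : ∀ x : X, ∃ l : ℝ, Tendsto (fun i => g i x) atTop (𝓝 l) := by
      intro x
      obtain ⟨y, hy, z, hz, rfl⟩ := hgen x
      have key : ∀ w : X, w ∈ P → ∃ l : ℝ, Tendsto (fun i => g i w) atTop (𝓝 l) := by
        intro w hw
        have hmw : Monotone (fun i => g i w) := fun i j hij => hmono i j hij w hw
        have hbw : BddAbove (Set.range (fun i => g i w)) := by
          refine ⟨b * ‖w‖, ?_⟩
          rintro r ⟨i, rfl⟩
          exact (le_abs_self _).trans (habs i w)
        exact ⟨_, tendsto_atTop_ciSup hmw hbw⟩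
      obtain ⟨ly, hly⟩ := key y hy
      obtain ⟨lz, hlz⟩ := key z hz
      exact ⟨ly - lz, (hly.sub hlz).congr fun i => (map_sub (g i) y z).symm⟩
    choose L hL using hlim
    have hadd : ∀ x y : X, L (x + y) = L x + L y := fun x y =>
      tendsto_nhds_unique (hL (x + y))
        (((hL x).add (hL y)).congr fun i => (map_add (g i) x y).symm)
    have hsmul : ∀ (c : ℝ) (x : X), L (c • x) = c * L x := fun c x =>
      tendsto_nhds_unique (hL (c • x))
        (((hL x).const_mul c).congr fun i => by rw [map_smul]; rfl)
    have hbound : ∀ x : X, ‖L x‖ ≤ b * ‖x‖ := by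
      intro x
      rw [Real.norm_eq_abs]
      exact le_of_tendsto (hL x).abs (Eventually.of_forall fun i => habs i x)
    set s : X →L[ℝ] ℝ := LinearMap.mkContinuous
      { toFun := L, map_add' := hadd,
        map_smul' := fun c x => by simpa using hsmul c x } b hbound with hs
    have hsx : ∀ x, s x = L x := fun x => rfl
    have hspos : dualPos P s := by
      intro x hx
      rw [hsx]
      exact ge_of_tendsto (hL x) (Eventually.of_forall fun i => hpos i x hx)
    refine ⟨s, inDualSpan_of_dualPos hspos, ?_, ?_⟩
    · intro i x hx
      rw [hsx]
      exact ge_of_tendsto (hL x)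
        (eventually_atTop.mpr ⟨i, fun j hij => hmono i j hij x hx⟩)
    · intro u _ hu x hx
      rw [hsx]
      exact le_of_tendsto (hL x) (Eventually.of_forall fun i => hu i x hx)
  -- Part 1 : existence of moduli
  have part1 : ∀ f : X →L[ℝ] ℝ, inDualSpan P f → ∃ m, IsDualModulus P f m := by
    intro f hf
    obtain ⟨gp, hgp, hq, hhq, hfeq⟩ := hf
    obtain ⟨ψ, hψdef⟩ : ∃ ψ : ℕ → X → ℝ, ∀ n x, ψ n x =
        sSup ((fun v => f (R n v)) '' {v : Z | -J x ≤ v ∧ v ≤ J x}) := ⟨_, fun _ _ => rfl⟩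
    have hmono' : ∀ (φ : X →L[ℝ] ℝ), dualPos P φ → ∀ n (a b : Z), a ≤ b →
        φ (R n a) ≤ φ (R n b) := by
      intro φ hφ n a b hab
      have h := hφ _ (hR n (b - a) (sub_nonneg.mpr hab))
      rw [map_sub, map_sub] at h
      linarith
    have hfRle : ∀ n (v : Z) (x : X), x ∈ P → -J x ≤ v → v ≤ J x →
        f (R n v) ≤ gp (R n (J x)) + hq (R n (J x)) := by
      intro n v x hx h1 h2
      have h0 : (0:Z) ≤ J x := hJ x hx
      have hvp : v⁺ ≤ J x := by rw [posPart_def]; exact sup_le h2 h0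
      have hvm : v⁻ ≤ J x := by rw [negPart_def]; exact sup_le (neg_le.mp h1) h0
      have e : v = v⁺ - v⁻ := (posPart_sub_negPart v).symm
      have hg1 : gp (R n v) ≤ gp (R n (J x)) := by
        conv_lhs => rw [e]
        rw [map_sub, map_sub]
        have h1' := hmono' gp hgp n _ _ hvp
        have h2' := hgp _ (hR n _ (negPart_nonneg v))
        linarith
      have hh1 : -hq (R n v) ≤ hq (R n (J x)) := by
        conv_lhs => rw [e]
        rw [map_sub, map_sub]
        have h1' := hmono' hq hhq n _ _ hvm
        have h2' := hhq _ (hR n _ (posPart_nonneg v))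
        linarith
      have he : f (R n v) = gp (R n v) - hq (R n v) := by
        rw [hfeq]; simp
      linarith
    have hne : ∀ n (x : X), x ∈ P →
        ((fun v => f (R n v)) '' {v : Z | -J x ≤ v ∧ v ≤ J x}).Nonempty := by
      intro n x hx
      exact ⟨f (R n 0), 0, ⟨neg_nonpos.mpr (hJ x hx), hJ x hx⟩, rfl⟩
    have hbdd : ∀ n (x : X), x ∈ P →
        BddAbove ((fun v => f (R n v)) '' {v : Z | -J x ≤ v ∧ v ≤ J x}) := by
      intro n x hx
      refine ⟨gp (R n (J x)) + hq (R n (J x)), ?_⟩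
      rintro r ⟨v, ⟨h1, h2⟩, rfl⟩
      exact hfRle n v x hx h1 h2
    have hψub : ∀ n (x : X) (hx : x ∈ P), ψ n x ≤ gp (R n (J x)) + hq (R n (J x)) := by
      intro n x hx
      rw [hψdef]
      refine csSup_le (hne n x hx) ?_
      rintro r ⟨v, ⟨h1, h2⟩, rfl⟩
      exact hfRle n v x hx h1 h2
    have hψmem : ∀ n (x : X), x ∈ P → ∀ v : Z, -J x ≤ v → v ≤ J x →
        f (R n v) ≤ ψ n x := by
      intro n x hx v h1 h2
      rw [hψdef]
      exact le_csSup (hbdd n x hx) ⟨v, ⟨h1, h2⟩, rfl⟩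
    have hψ0 : ∀ n (x : X), x ∈ P → 0 ≤ ψ n x := by
      intro n x hx
      have := hψmem n x hx 0 (neg_nonpos.mpr (hJ x hx)) (hJ x hx)
      simpa using this
    have hψzero : ∀ n, ψ n (0 : X) = 0 := by
      intro n
      refine le_antisymm ?_ (hψ0 n 0 h0P)
      rw [hψdef]
      refine csSup_le (hne n 0 h0P) ?_
      rintro r ⟨v, ⟨h1, h2⟩, rfl⟩
      have hv : v = 0 := le_antisymm (by simpa using h2) (by simpa using h1)
      simp [hv]
    have hψadd : ∀ n (x y : X), x ∈ P → y ∈ P → ψ n (x + y) = ψ n x + ψ n y := by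
      intro n x y hx hy
      have hxy := hPadd x hx y hy
      have hJx := hJ x hx
      have hJy := hJ y hy
      apply le_antisymm
      · rw [hψdef]
        refine csSup_le (hne n _ hxy) ?_
        rintro r ⟨v, ⟨h1, h2⟩, rfl⟩
        rw [map_add] at h1 h2
        obtain ⟨w, hw1, hw2, hw3, hw4⟩ := riesz_decomp hJx hJy h1 h2
        have he : f (R n v) = f (R n w) + f (R n (v - w)) := by
          rw [← map_add, ← map_add]
          congr 2
          abel
        show f (R n v) ≤ ψ n x + ψ n y
        rw [he]
        exact add_le_add (hψmem n x hx w hw1 hw2) (hψmem n y hy _ hw3 hw4)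
      · have key : ∀ v : Z, -J x ≤ v → v ≤ J x → ∀ w : Z, -J y ≤ w → w ≤ J y →
            f (R n v) + f (R n w) ≤ ψ n (x + y) := by
          intro v hv1 hv2 w hw1 hw2
          have hmem1 : -J (x + y) ≤ v + w := by
            rw [map_add, neg_add]
            exact add_le_add hv1 hw1
          have hmem2 : v + w ≤ J (x + y) := by
            rw [map_add]
            exact add_le_add hv2 hw2
          have h := hψmem n _ hxy (v + w) hmem1 hmem2
          rw [map_add, map_add] at h
          exact h
        have h2 : ∀ a ∈ (fun v => f (R n v)) '' {v : Z | -J x ≤ v ∧ v ≤ J x},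
            ψ n y ≤ ψ n (x + y) - a := by
          rintro a ⟨v, ⟨hv1, hv2⟩, rfl⟩
          rw [hψdef]
          refine csSup_le (hne n y hy) ?_
          rintro b ⟨w, ⟨hw1, hw2⟩, rfl⟩
          linarith [key v hv1 hv2 w hw1 hw2]
        have h3 : ψ n x ≤ ψ n (x + y) - ψ n y := by
          rw [hψdef]
          refine csSup_le (hne n x hx) ?_
          intro a ha
          linarith [h2 a ha]
        linarith
    have hψmono : ∀ n (x y : X), x ∈ P → y ∈ P → y - x ∈ P → ψ n x ≤ ψ n y := by
      intro n x y hx hy hyx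
      have hJxy : J x ≤ J y := by
        have := hJ _ hyx
        rw [map_sub] at this
        exact sub_nonneg.mp this
      rw [hψdef, hψdef]
      refine csSup_le (hne n x hx) ?_
      rintro r ⟨v, ⟨h1, h2⟩, rfl⟩
      exact le_csSup (hbdd n y hy) ⟨v, ⟨(neg_le_neg hJxy).trans h1, h2.trans hJxy⟩, rfl⟩
    obtain ⟨U, hU⟩ := Ultrafilter.exists_le (atTop : Filter ℕ)
    have hexists : ∀ x : X, x ∈ P → ∃ l : ℝ, Tendsto (fun n => ψ n x) (↑U) (𝓝 l) := by
      intro x hx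
      have hevB : ∀ᶠ n in atTop, gp (R n (J x)) + hq (R n (J x)) ≤ gp x + hq x + 1 := by
        have ht := (hWOT x gp).add (hWOT x hq)
        exact ht.eventually_le_const (by linarith)
      have hev : ∀ᶠ n in (↑U : Filter ℕ), ψ n x ∈ Set.Icc (0:ℝ) (gp x + hq x + 1) := by
        refine hU ?_
        filter_upwards [hevB] with n hn
        exact ⟨hψ0 n x hx, (hψub n x hx).trans hn⟩
      have hcmp : ↑(U.map (fun n => ψ n x)) ≤ 𝓟 (Set.Icc (0:ℝ) (gp x + hq x + 1)) := by
        rw [Ultrafilter.coe_map]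
        exact le_principal_iff.mpr (mem_map.mpr hev)
      obtain ⟨l, -, hl⟩ := (isCompact_Icc (a := (0:ℝ)) (b := gp x + hq x + 1)).ultrafilter_le_nhds
        _ hcmp
      exact ⟨l, by rwa [Ultrafilter.coe_map] at hl⟩
    obtain ⟨m₀, hm₀⟩ : ∃ m₀ : X → ℝ, ∀ x (_ : x ∈ P),
        Tendsto (fun n => ψ n x) (↑U : Filter ℕ) (𝓝 (m₀ x)) := by
      choose F hF using hexists
      exact ⟨fun x => if hx : x ∈ P then F x hx else 0,
        fun x hx => by simp only [dif_pos hx]; exact hF x hx⟩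
    have hm0add : ∀ x y : X, x ∈ P → y ∈ P → m₀ (x + y) = m₀ x + m₀ y := by
      intro x y hx hy
      exact tendsto_nhds_unique (hm₀ (x + y) (hPadd x hx y hy))
        (((hm₀ x hx).add (hm₀ y hy)).congr fun n => (hψadd n x y hx hy).symm)
    have hm0zero : m₀ (0 : X) = 0 := by
      refine tendsto_nhds_unique (hm₀ 0 h0P) ?_
      simp only [hψzero]
      exact tendsto_const_nhds
    have hm0nonneg : ∀ x ∈ P, 0 ≤ m₀ x := fun x hx =>
      le_of_tendsto_of_tendsto' tendsto_const_nhds (hm₀ x hx) (fun n => hψ0 n x hx)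
    have hm0mono : ∀ x y : X, x ∈ P → y ∈ P → y - x ∈ P → m₀ x ≤ m₀ y := fun x y hx hy hyx =>
      le_of_tendsto_of_tendsto' (hm₀ x hx) (hm₀ y hy) (fun n => hψmono n x y hx hy hyx)
    have hm0ub : ∀ w ∈ P, m₀ w ≤ gp w + hq w := fun w hw =>
      le_of_tendsto_of_tendsto' (hm₀ w hw)
        (((hWOT w gp).add (hWOT w hq)).mono_left hU) (fun n => hψub n w hw)
    -- ℕ-homogeneity
    have hnat : ∀ (k : ℕ) (x : X), x ∈ P → m₀ ((k:ℝ) • x) = k * m₀ x := by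
      intro k x hx
      induction k with
      | zero => simpa using hm0zero
      | succ k ih =>
        have hkx : (k:ℝ) • x ∈ P := hPsmul _ (by positivity) x hx
        have he : ((k+1:ℕ):ℝ) • x = (k:ℝ) • x + x := by
          push_cast
          rw [add_smul, one_smul]
        rw [he, hm0add _ _ hkx hx, ih]
        push_cast
        ring
    have hrat : ∀ (q : ℚ), 0 ≤ q → ∀ x ∈ P, m₀ ((q:ℝ) • x) = (q:ℝ) * m₀ x := by
      intro q hq x hx
      have hd : (0:ℝ) < (q.den:ℝ) := by exact_mod_cast q.den_pos
      have hq0 : (0:ℝ) ≤ (q:ℝ) := by exact_mod_cast hq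
      have hqx : (q:ℝ) • x ∈ P := hPsmul _ hq0 x hx
      have hcast : ((q.num.toNat : ℕ):ℝ) = (q.num:ℝ) := by
        exact_mod_cast congrArg (Int.cast : ℤ → ℝ) (Int.toNat_of_nonneg (Rat.num_nonneg.mpr hq))
      have h1 : ((q.den:ℕ):ℝ) • ((q:ℝ) • x) = ((q.num.toNat : ℕ):ℝ) • x := by
        rw [smul_smul]
        congr 1
        rw [hcast, Rat.cast_def]
        field_simp
      have h2 := hnat q.den _ hqx
      rw [h1, hnat _ x hx] at h2
      rw [hcast] at h2
      have h3 : (q:ℝ) = (q.num:ℝ) / (q.den:ℝ) := by rw [Rat.cast_def]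
      have hden : (q.den:ℝ) ≠ 0 := ne_of_gt hd
      have goal' : (q.den:ℝ) * m₀ ((q:ℝ) • x) = (q.den:ℝ) * ((q:ℝ) * m₀ x) := by
        rw [← h2, h3]
        field_simp
      exact mul_left_cancel₀ hden goal'
    have hhom : ∀ (c : ℝ), 0 ≤ c → ∀ x ∈ P, m₀ (c • x) = c * m₀ x := by
      intro c hc x hx
      rcases eq_or_lt_of_le hc with h0 | hcpos
      · rw [← h0, zero_smul, hm0zero, zero_mul]
      have hx0 := hm0nonneg x hx
      have hd : (0:ℝ) < m₀ x + 1 := by linarith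
      apply le_antisymm
      · apply le_of_forall_pos_le_add
        intro ε hε
        have hε' : (0:ℝ) < ε / (m₀ x + 1) := by positivity
        obtain ⟨qq, hq1, hq2⟩ := exists_rat_btwn (show c < c + ε / (m₀ x + 1) by linarith)
        have hq0 : (0:ℝ) ≤ (qq:ℝ) := le_of_lt (hcpos.trans hq1)
        have hmem1 : c • x ∈ P := hPsmul c hc x hx
        have hmem2 : (qq:ℝ) • x ∈ P := hPsmul _ hq0 x hx
        have hdiff : (qq:ℝ) • x - c • x ∈ P := by
          rw [← sub_smul]
          exact hPsmul _ (by linarith) x hx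
        have hle := hm0mono _ _ hmem1 hmem2 hdiff
        rw [hrat qq (by exact_mod_cast hq0) x hx] at hle
        have hmul : (qq:ℝ) * m₀ x ≤ (c + ε / (m₀ x + 1)) * m₀ x :=
          mul_le_mul_of_nonneg_right (le_of_lt hq2) hx0
        have hcancel : (ε / (m₀ x + 1)) * (m₀ x + 1) = ε := div_mul_cancel₀ ε (ne_of_gt hd)
        nlinarith [hle, hmul]
      · apply le_of_forall_pos_le_add
        intro ε hε
        have hε'pos : (0:ℝ) < min c (ε / (m₀ x + 1)) := lt_min hcpos (by positivity)
        obtain ⟨qq, hq1, hq2⟩ := exists_rat_btwn (show c - min c (ε / (m₀ x + 1)) < c by linarith)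
        have hq0 : (0:ℝ) ≤ (qq:ℝ) := by
          have h1 : c - min c (ε / (m₀ x + 1)) ≥ 0 := by
            have := min_le_left c (ε / (m₀ x + 1))
            linarith
          linarith
        have hmem1 : c • x ∈ P := hPsmul c hc x hx
        have hmem2 : (qq:ℝ) • x ∈ P := hPsmul _ hq0 x hx
        have hdiff : c • x - (qq:ℝ) • x ∈ P := by
          rw [← sub_smul]
          exact hPsmul _ (by linarith) x hx
        have hle := hm0mono _ _ hmem2 hmem1 hdiff
        rw [hrat qq (by exact_mod_cast hq0) x hx] at hle
        have hmin2 := min_le_right c (ε / (m₀ x + 1))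
        have hcancel : (ε / (m₀ x + 1)) * (m₀ x + 1) = ε := div_mul_cancel₀ ε (ne_of_gt hd)
        nlinarith [hle, mul_le_mul_of_nonneg_right hmin2 hx0]
    -- linear extension via bounded decompositions
    have wd : ∀ y z y' z' : X, y ∈ P → z ∈ P → y' ∈ P → z' ∈ P → y - z = y' - z' →
        m₀ y - m₀ z = m₀ y' - m₀ z' := by
      intro y z y' z' hy hz hy' hz' he
      have he' : y + z' = y' + z := sub_eq_sub_iff_add_eq_add.mp he
      have h1 := hm0add y z' hy hz'
      have h2 := hm0add y' z hy' hz
      rw [he', h2] at h1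
      linarith
    choose dy hdyP dz hdzP hdxyz hdb using hdec
    obtain ⟨M, hM⟩ : ∃ M : X → ℝ, ∀ x, M x = m₀ (dy x) - m₀ (dz x) := ⟨_, fun _ => rfl⟩
    have hMP : ∀ x ∈ P, M x = m₀ x := by
      intro x hx
      have h := wd (dy x) (dz x) x 0 (hdyP x) (hdzP x) hx h0P (by rw [← hdxyz x, sub_zero])
      rw [hM, h, hm0zero, sub_zero]
    have hMadd : ∀ x y : X, M (x + y) = M x + M y := by
      intro x y
      have hd1 : dy (x + y) - dz (x + y) = (dy x + dy y) - (dz x + dz y) := by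
        rw [← hdxyz (x + y),
          show (dy x + dy y) - (dz x + dz y) = (dy x - dz x) + (dy y - dz y) by abel,
          ← hdxyz x, ← hdxyz y]
      have h := wd _ _ _ _ (hdyP (x + y)) (hdzP (x + y))
        (hPadd _ (hdyP x) _ (hdyP y)) (hPadd _ (hdzP x) _ (hdzP y)) hd1
      rw [hM, hM, hM, h, hm0add _ _ (hdyP x) (hdyP y), hm0add _ _ (hdzP x) (hdzP y)]
      ring
    have hMneg : ∀ x : X, M (-x) = - M x := by
      intro x
      have hd1 : dy (-x) - dz (-x) = dz x - dy x := by
        rw [← hdxyz (-x), show dz x - dy x = -(dy x - dz x) by abel, ← hdxyz x]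
      have h := wd _ _ _ _ (hdyP (-x)) (hdzP (-x)) (hdzP x) (hdyP x) hd1
      rw [hM, hM, h]
      ring
    have hMsmul0 : ∀ (c : ℝ), 0 ≤ c → ∀ x : X, M (c • x) = c * M x := by
      intro c hc x
      have hd1 : dy (c • x) - dz (c • x) = c • dy x - c • dz x := by
        rw [← hdxyz (c • x), ← smul_sub, ← hdxyz x]
      have h := wd _ _ _ _ (hdyP (c • x)) (hdzP (c • x))
        (hPsmul c hc _ (hdyP x)) (hPsmul c hc _ (hdzP x)) hd1
      rw [hM, hM, h, hhom c hc _ (hdyP x), hhom c hc _ (hdzP x)]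
      ring
    have hMsmul : ∀ (c : ℝ) (x : X), M (c • x) = c * M x := by
      intro c x
      rcases le_or_gt 0 c with hc | hc
      · exact hMsmul0 c hc x
      · have he : c • x = -((-c) • x) := by rw [neg_smul, neg_neg]
        rw [he, hMneg, hMsmul0 (-c) (by linarith) x]
        ring
    have hm0ub' : ∀ w ∈ P, m₀ w ≤ (‖gp‖ + ‖hq‖) * ‖w‖ := by
      intro w hw
      have h1 := hm0ub w hw
      have h2 : gp w ≤ ‖gp‖ * ‖w‖ := by
        have := gp.le_opNorm w
        rw [Real.norm_eq_abs] at this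
        linarith [le_abs_self (gp w)]
      have h3 : hq w ≤ ‖hq‖ * ‖w‖ := by
        have := hq.le_opNorm w
        rw [Real.norm_eq_abs] at this
        linarith [le_abs_self (hq w)]
      rw [add_mul]
      linarith
    have hMbound : ∀ x : X, ‖M x‖ ≤ ((‖gp‖ + ‖hq‖) * C) * ‖x‖ := by
      intro x
      rw [Real.norm_eq_abs, hM]
      have ha := hm0nonneg _ (hdyP x)
      have hb := hm0nonneg _ (hdzP x)
      have h1 := hm0ub' _ (hdyP x)
      have h2 := hm0ub' _ (hdzP x)
      have hnsum := hdb x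
      have hK : (0:ℝ) ≤ ‖gp‖ + ‖hq‖ := by positivity
      have habs : |m₀ (dy x) - m₀ (dz x)| ≤ m₀ (dy x) + m₀ (dz x) :=
        abs_le.mpr ⟨by linarith, by linarith⟩
      have hsum : m₀ (dy x) + m₀ (dz x) ≤ (‖gp‖ + ‖hq‖) * (‖dy x‖ + ‖dz x‖) := by
        rw [mul_add]
        linarith
      calc |m₀ (dy x) - m₀ (dz x)| ≤ (‖gp‖ + ‖hq‖) * (‖dy x‖ + ‖dz x‖) :=
            habs.trans hsum
        _ ≤ (‖gp‖ + ‖hq‖) * (C * ‖x‖) := mul_le_mul_of_nonneg_left hnsum hK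
        _ = ((‖gp‖ + ‖hq‖) * C) * ‖x‖ := by ring
    set m : X →L[ℝ] ℝ := LinearMap.mkContinuous
      { toFun := M, map_add' := hMadd,
        map_smul' := fun c x => by simpa using hMsmul c x }
      ((‖gp‖ + ‖hq‖) * C) hMbound with hmdef
    have hmx : ∀ x, m x = M x := fun x => rfl
    refine ⟨m, ?_, ?_, ?_, ?_⟩
    · intro x hx
      rw [hmx, hMP x hx]
      exact hm0nonneg x hx
    · intro x hx
      rw [hmx, hMP x hx]
      exact le_of_tendsto_of_tendsto' ((hWOT x f).mono_left hU) (hm₀ x hx)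
        (fun n => hψmem n x hx (J x) ((neg_nonpos.mpr (hJ x hx)).trans (hJ x hx)) le_rfl)
    · intro x hx
      rw [hmx, hMP x hx]
      simp only [ContinuousLinearMap.neg_apply]
      refine le_of_tendsto_of_tendsto' ((hWOT x f).neg.mono_left hU) (hm₀ x hx) (fun n => ?_)
      have h := hψmem n x hx (-(J x)) (le_refl _) ((neg_nonpos.mpr (hJ x hx)).trans (hJ x hx))
      rw [map_neg, map_neg] at h
      exact h
    · intro u _ hfu hfu' x hx
      rw [hmx, hMP x hx]
      have hu0 : dualPos P u := by
        intro w hw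
        have h1 := hfu w hw
        have h2 := hfu' w hw
        simp only [ContinuousLinearMap.neg_apply] at h2
        linarith
      have hstep : ∀ n, ψ n x ≤ u (R n (J x)) := by
        intro n
        rw [hψdef]
        refine csSup_le (hne n x hx) ?_
        rintro r ⟨v, ⟨h1, h2⟩, rfl⟩
        have e : v = v⁺ - v⁻ := (posPart_sub_negPart v).symm
        have habs : v⁺ + v⁻ ≤ J x := by
          rw [posPart_add_negPart]
          exact abs_le'.mpr ⟨h2, neg_le.mp h1⟩
        have e2 : f (R n v) = f (R n v⁺) - f (R n v⁻) := by
          conv_lhs => rw [e]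
          rw [map_sub, map_sub]
        have l1 := hfu _ (hR n _ (posPart_nonneg v))
        have l2 := hfu' _ (hR n _ (negPart_nonneg v))
        simp only [ContinuousLinearMap.neg_apply] at l2
        have h4 : u (R n v⁺) + u (R n v⁻) = u (R n (v⁺ + v⁻)) := by
          rw [map_add, map_add]
        have h5 : u (R n (v⁺ + v⁻)) ≤ u (R n (J x)) := hmono' u hu0 n _ _ habs
        linarith
      exact le_of_tendsto_of_tendsto' (hm₀ x hx) ((hWOT x u).mono_left hU) hstep
  -- Part 2 : equivalent lattice norm
  have part2 : ∃ N : (X →L[ℝ] ℝ) → ℝ, ∃ c₁ > (0 : ℝ), ∃ c₂ > (0 : ℝ),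
      (∀ f, inDualSpan P f →
        c₁ * dualSpanNorm P f ≤ N f ∧ N f ≤ c₂ * dualSpanNorm P f) ∧
      (∀ f g mf mg, inDualSpan P f → inDualSpan P g →
        IsDualModulus P f mf → IsDualModulus P g mg → dualLE P mf mg → N f ≤ N g) := by
    have uniq : ∀ (f m₁ m₂ : X →L[ℝ] ℝ), IsDualModulus P f m₁ → IsDualModulus P f m₂ →
        m₁ = m₂ := by
      intro f m₁ m₂ h₁ h₂
      have hle1 : dualLE P m₁ m₂ :=
        h₁.2.2.2 m₂ (inDualSpan_of_dualPos h₂.1) h₂.2.1 h₂.2.2.1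
      have hle2 : dualLE P m₂ m₁ :=
        h₂.2.2.2 m₁ (inDualSpan_of_dualPos h₁.1) h₁.2.1 h₁.2.2.1
      ext x
      obtain ⟨y, hy, z, hz, rfl⟩ := hgen x
      rw [map_sub, map_sub]
      have e1 : m₁ y = m₂ y := le_antisymm (hle1 y hy) (hle2 y hy)
      have e2 : m₁ z = m₂ z := le_antisymm (hle1 z hz) (hle2 z hz)
      rw [e1, e2]
    obtain ⟨mod, hmod⟩ : ∃ mod : (X →L[ℝ] ℝ) → (X →L[ℝ] ℝ),
        ∀ f m, IsDualModulus P f m → mod f = m := by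
      refine ⟨fun f => if h : ∃ m, IsDualModulus P f m then h.choose else 0, ?_⟩
      intro f m hm
      have hex : ∃ m, IsDualModulus P f m := ⟨m, hm⟩
      show (if h : ∃ m, IsDualModulus P f m then h.choose else 0) = m
      rw [dif_pos hex]
      exact uniq f _ m hex.choose_spec hm
    obtain ⟨N, hN⟩ : ∃ N : (X →L[ℝ] ℝ) → ℝ, ∀ f, N f =
        sSup ((fun x => mod f x) '' (P ∩ Metric.closedBall 0 1)) := ⟨_, fun _ => rfl⟩
    have hmem0 : (0:X) ∈ P ∩ Metric.closedBall 0 1 := ⟨h0P, by simp⟩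
    have himne : ∀ f : X →L[ℝ] ℝ, ((fun x => mod f x) '' (P ∩ Metric.closedBall 0 1)).Nonempty :=
      fun f => ⟨mod f 0, 0, hmem0, rfl⟩
    have himbdd : ∀ f : X →L[ℝ] ℝ, BddAbove ((fun x => mod f x) '' (P ∩ Metric.closedBall 0 1)) := by
      intro f
      refine ⟨‖mod f‖, ?_⟩
      rintro r ⟨x, ⟨-, hx1⟩, rfl⟩
      rw [Metric.mem_closedBall, dist_zero_right] at hx1
      have h := (mod f).le_opNorm x
      rw [Real.norm_eq_abs] at h
      nlinarith [le_abs_self (mod f x), norm_nonneg (mod f)]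
    have hNnonneg : ∀ (f m : X →L[ℝ] ℝ), IsDualModulus P f m → 0 ≤ N f := by
      intro f m hm
      rw [hN]
      exact le_csSup (himbdd f) ⟨0, hmem0, map_zero _⟩
    -- norm bound for positive functionals
    have posNormBound : ∀ φ : X →L[ℝ] ℝ, dualPos P φ →
        ‖φ‖ ≤ C * sSup ((fun x => φ x) '' (P ∩ Metric.closedBall 0 1)) := by
      intro φ hφ
      set Nφ := sSup ((fun x => φ x) '' (P ∩ Metric.closedBall 0 1)) with hNφ
      have hbddφ : BddAbove ((fun x => φ x) '' (P ∩ Metric.closedBall 0 1)) := by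
        refine ⟨‖φ‖, ?_⟩
        rintro r ⟨x, ⟨-, hx1⟩, rfl⟩
        rw [Metric.mem_closedBall, dist_zero_right] at hx1
        have h := φ.le_opNorm x
        rw [Real.norm_eq_abs] at h
        nlinarith [le_abs_self (φ x), norm_nonneg φ]
      have hNφ0 : 0 ≤ Nφ := le_csSup hbddφ ⟨0, hmem0, map_zero _⟩
      have hvalbound : ∀ w ∈ P, φ w ≤ Nφ * ‖w‖ := by
        intro w hw
        rcases eq_or_ne w 0 with rfl | hw0
        · simp
        · have hnw : (0:ℝ) < ‖w‖ := norm_pos_iff.mpr hw0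
          have hmemw : ‖w‖⁻¹ • w ∈ P ∩ Metric.closedBall 0 1 := by
            refine ⟨hPsmul _ (by positivity) w hw, ?_⟩
            rw [Metric.mem_closedBall, dist_zero_right, norm_smul, Real.norm_of_nonneg
              (by positivity), inv_mul_cancel₀ (ne_of_gt hnw)]
          have h := le_csSup hbddφ ⟨_, hmemw, rfl⟩
          simp only [map_smul, smul_eq_mul] at h
          rw [← hNφ] at h
          calc φ w = ‖w‖ * (‖w‖⁻¹ * φ w) := by field_simp
            _ ≤ ‖w‖ * Nφ := mul_le_mul_of_nonneg_left h hnw.le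
            _ = Nφ * ‖w‖ := mul_comm _ _
      refine φ.opNorm_le_bound (by positivity) (fun x => ?_)
      obtain ⟨y, z, hyz⟩ : ∃ y z, y ∈ P ∧ z ∈ P ∧ x = y - z ∧ ‖y‖ + ‖z‖ ≤ C * ‖x‖ := by
        obtain ⟨y, hy, z, hz, h1, h2⟩ := hdec x
        exact ⟨y, z, hy, hz, h1, h2⟩
      obtain ⟨hy, hz, hxyz, hnsum⟩ := hyz
      have h1 := hvalbound y hy
      have h2 := hvalbound z hz
      have h0y := hφ y hy
      have h0z := hφ z hz
      have hφx : φ x = φ y - φ z := by rw [hxyz, map_sub]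
      rw [Real.norm_eq_abs, hφx]
      have habs : |φ y - φ z| ≤ φ y + φ z := abs_le.mpr ⟨by linarith, by linarith⟩
      calc |φ y - φ z| ≤ φ y + φ z := habs
        _ ≤ Nφ * ‖y‖ + Nφ * ‖z‖ := add_le_add h1 h2
        _ = Nφ * (‖y‖ + ‖z‖) := by ring
        _ ≤ Nφ * (C * ‖x‖) := mul_le_mul_of_nonneg_left hnsum hNφ0
        _ = C * Nφ * ‖x‖ := by ring
    refine ⟨N, 1/(2*C), by positivity, 1, one_pos, ?_, ?_⟩
    · intro f hf
      obtain ⟨m, hm⟩ := part1 f hf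
      have hmodf : mod f = m := hmod f m hm
      constructor
      · -- lower bound: dualSpanNorm ≤ 2C * N f
        have hg' : dualPos P ((1/2:ℝ) • (m + f)) := by
          intro x hx
          have h := hm.2.2.1 x hx
          simp only [ContinuousLinearMap.neg_apply] at h
          simp only [ContinuousLinearMap.smul_apply, ContinuousLinearMap.add_apply,
            smul_eq_mul]
          linarith
        have hh' : dualPos P ((1/2:ℝ) • (m - f)) := by
          intro x hx
          have h := hm.2.1 x hx
          simp only [ContinuousLinearMap.smul_apply, ContinuousLinearMap.sub_apply,
            smul_eq_mul]
          linarith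
        have hfd : f = (1/2:ℝ) • (m + f) - (1/2:ℝ) • (m - f) := by
          ext x
          simp only [ContinuousLinearMap.sub_apply, ContinuousLinearMap.smul_apply,
            ContinuousLinearMap.add_apply, smul_eq_mul]
          ring
        have hds : dualSpanNorm P f ≤ ‖(1/2:ℝ) • (m + f)‖ + ‖(1/2:ℝ) • (m - f)‖ :=
          csInf_le (dualSpanNorm_bddBelow P f)
            ⟨_, hg', _, hh', hfd, rfl⟩
        have hsuple : ∀ (φ : X →L[ℝ] ℝ), dualPos P φ → (∀ x ∈ P, φ x ≤ m x) →
            sSup ((fun x => φ x) '' (P ∩ Metric.closedBall 0 1)) ≤ N f := by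
          intro φ hφ hle
          rw [hN, hmodf]
          refine csSup_le ⟨φ 0, 0, hmem0, rfl⟩ ?_
          rintro r ⟨x, hx, rfl⟩
          exact (hle x hx.1).trans (le_csSup (by rw [← hmodf]; exact himbdd f)
            ⟨x, hx, rfl⟩)
        have hb1 : ‖(1/2:ℝ) • (m + f)‖ ≤ C * N f := by
          refine (posNormBound _ hg').trans ?_
          refine mul_le_mul_of_nonneg_left ?_ hC.le
          refine hsuple _ hg' (fun x hx => ?_)
          have h1 := hm.2.1 x hx
          have h2 := hm.2.2.1 x hx
          simp only [ContinuousLinearMap.neg_apply] at h2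
          simp only [ContinuousLinearMap.smul_apply, ContinuousLinearMap.add_apply,
            smul_eq_mul]
          linarith
        have hb2 : ‖(1/2:ℝ) • (m - f)‖ ≤ C * N f := by
          refine (posNormBound _ hh').trans ?_
          refine mul_le_mul_of_nonneg_left ?_ hC.le
          refine hsuple _ hh' (fun x hx => ?_)
          have h1 := hm.2.1 x hx
          have h2 := hm.2.2.1 x hx
          simp only [ContinuousLinearMap.neg_apply] at h2
          simp only [ContinuousLinearMap.smul_apply, ContinuousLinearMap.sub_apply,
            smul_eq_mul]
          linarith
        have : dualSpanNorm P f ≤ 2 * C * N f := by linarith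
        have hNf0 := hNnonneg f m hm
        calc 1/(2*C) * dualSpanNorm P f ≤ 1/(2*C) * (2 * C * N f) :=
              mul_le_mul_of_nonneg_left this (by positivity)
          _ = N f := by field_simp
      · -- upper bound: N f ≤ dualSpanNorm f
        rw [one_mul]
        refine le_csInf ?_ ?_
        · obtain ⟨g1, hg1, h1, hh1, hfe⟩ := hf
          exact ⟨‖g1‖ + ‖h1‖, g1, hg1, h1, hh1, hfe, rfl⟩
        · rintro r ⟨g1, hg1, h1, hh1, hfe, rfl⟩
          rw [hN, hmodf]
          refine csSup_le ⟨m 0, 0, hmem0, rfl⟩ ?_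
          rintro r' ⟨x, ⟨hxP, hx1⟩, rfl⟩
          rw [Metric.mem_closedBall, dist_zero_right] at hx1
          have hle : dualLE P m (g1 + h1) := by
            refine hm.2.2.2 (g1 + h1) ?_ ?_ ?_
            · exact inDualSpan_of_dualPos (fun w hw => add_nonneg (hg1 w hw) (hh1 w hw))
            · intro w hw
              have : f w = g1 w - h1 w := by rw [hfe]; simp
              have := hh1 w hw
              simp only [ContinuousLinearMap.add_apply]
              linarith [hg1 w hw, ‹f w = g1 w - h1 w›, this]
            · intro w hw
              have he : f w = g1 w - h1 w := by rw [hfe]; simp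
              simp only [ContinuousLinearMap.neg_apply, ContinuousLinearMap.add_apply]
              linarith [hg1 w hw, hh1 w hw]
          have h2 := hle x hxP
          simp only [ContinuousLinearMap.add_apply] at h2
          have hg1b : g1 x ≤ ‖g1‖ := by
            have h := g1.le_opNorm x
            rw [Real.norm_eq_abs] at h
            nlinarith [le_abs_self (g1 x), norm_nonneg g1]
          have hh1b : h1 x ≤ ‖h1‖ := by
            have h := h1.le_opNorm x
            rw [Real.norm_eq_abs] at h
            nlinarith [le_abs_self (h1 x), norm_nonneg h1]
          linarith
    · intro f g mf mg hf hg hmf hmg hle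
      rw [hN, hN, hmod f mf hmf, hmod g mg hmg]
      refine csSup_le ⟨mf 0, 0, hmem0, rfl⟩ ?_
      rintro r ⟨x, hx, rfl⟩
      refine (hle x hx.1).trans (le_csSup ?_ ⟨x, hx, rfl⟩)
      rw [← hmod g mg hmg]
      exact himbdd g

  exact ⟨part1, part2, part3⟩
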